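/- Let p be a prime. Then β_p(k) = k·p for every k with 1 ≤ k ≤ p, and β_p(k) < k·p for every k > p. -/

import Mathlib

/-- `α_p(n)`: the `p`-adic valuation of `n!`
(equivalently `Σ_{k ≥ 1} ⌊n / p^k⌋`). -/
def alphaP (p n : ℕ) : ℕ := padicValNat p (Nat.factorial n)

/-- `β_p(n)`: the least `m` with `α_p(m) ≥ n`. -/
noncomputable def betaP (p n : ℕ) : ℕ := sInf {m | n ≤ alphaP p m}

lemma alphaP_mono (p : ℕ) [Fact p.Prime] {m n : ℕ} (h : m ≤ n) :
    alphaP p m ≤ alphaP p n := by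
  have hd : p ^ (alphaP p m) ∣ Nat.factorial n :=
    dvd_trans pow_padicValNat_dvd (Nat.factorial_dvd_factorial h)
  exact (padicValNat_dvd_iff_le (Nat.factorial_ne_zero n)).mp hd

/-- For `1 ≤ k ≤ p` one has `β_p(k) = k·p`, and for `k > p` one has
`β_p(k) < k·p`. -/
theorem betaP_eq_mul_of_le_and_lt_of_gt (p : ℕ) (hp : p.Prime) :
    (∀ k : ℕ, 1 ≤ k → k ≤ p → betaP p k = k * p) ∧
    (∀ k : ℕ, p < k → betaP p k < k * p) := by
  haveI : Fact p.Prime := ⟨hp⟩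
  have hmul : ∀ n : ℕ, alphaP p (p * n) = alphaP p n + n := fun n =>
    padicValNat_factorial_mul n
  constructor
  · intro k hk1 hkp
    have hmem : k * p ∈ {m | k ≤ alphaP p m} := by
      simp only [Set.mem_setOf_eq]
      rw [mul_comm, hmul k]; omega
    apply le_antisymm
    · exact Nat.sInf_le hmem
    · -- show every element of the set is ≥ k * p, i.e. α (k*p - 1) < k
      have hpred : alphaP p (k * p - 1) = k - 1 := by
        have h1 : k * p - 1 = p * (k - 1) + (p - 1) := by
          obtain ⟨m, rfl⟩ := Nat.exists_eq_add_of_le hk1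
          have h : 1 + m - 1 = m := by omega
          rw [h]
          have e : (1 + m) * p = p * m + p := by ring
          have := hp.two_le
          omega
        have h2 : alphaP p (p * (k - 1) + (p - 1)) = alphaP p (p * (k - 1)) :=
          padicValNat_factorial_mul_add (k - 1) (by omega)
        have h3 : alphaP p (k - 1) = 0 := by
          apply padicValNat.eq_zero_of_not_dvd
          intro hdvd
          have := (Nat.Prime.dvd_factorial hp).mp hdvd
          omega
        rw [h1, h2, hmul (k - 1), h3, zero_add]
      have hne : {m | k ≤ alphaP p m}.Nonempty := ⟨k * p, hmem⟩
      have hsp := Nat.sInf_mem hne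
      simp only [Set.mem_setOf_eq] at hsp
      by_contra hlt
      push_neg at hlt
      have : alphaP p (betaP p k) ≤ alphaP p (k * p - 1) :=
        alphaP_mono p (by omega)
      rw [hpred] at this
      have hsp' : k ≤ alphaP p (betaP p k) := hsp
      omega
  · intro k hk
    have hmem : (k - 1) * p ∈ {m | k ≤ alphaP p m} := by
      simp only [Set.mem_setOf_eq]
      rw [mul_comm, hmul (k - 1)]
      have h1 : 1 ≤ alphaP p (k - 1) := by
        apply one_le_padicValNat_of_dvd (Nat.factorial_pos _).ne'
        exact (Nat.Prime.dvd_factorial hp).mpr (by omega)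
      omega
    have h2 : betaP p k ≤ (k - 1) * p := Nat.sInf_le hmem
    have := hp.two_le
    calc betaP p k ≤ (k - 1) * p := h2
      _ < k * p := by
          exact (Nat.mul_lt_mul_right (by omega)).mpr (by omega)
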